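/- For every finitely supported sequence a : ℕ → ℝ one has Σ_{n,n'} a_n v^{0,0}_{n,n'} a_{n'} ≤ (Γ(1/4)⁴/(2π²)) · Σ_{n=0}^∞ √(n+1) a_n². -/

import Mathlib

open Real

/-- Pochhammer symbol `(x)_a = Γ(x+a)/Γ(x)` for real arguments. -/
noncomputable def poch (x a : ℝ) : ℝ := Real.Gamma (x + a) / Real.Gamma x

/-- Coulomb matrix elements `v^{m,0}_{n,n'}`. -/
noncomputable def v0 (m : ℤ) (n n' : ℕ) : ℝ :=
  (1 / (Real.pi * Real.sqrt (poch ((n : ℝ) + 1) ((|m| : ℤ) : ℝ) *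
      poch ((n' : ℝ) + 1) ((|m| : ℤ) : ℝ)))) *
    ∑ k ∈ Finset.range (min n n' + 1),
      poch ((k : ℝ) + 1) (((|m| : ℤ) : ℝ) - 1/2) /
        (poch ((n : ℝ) - (k : ℝ) + 1/2) (1/2) * poch ((n' : ℝ) - (k : ℝ) + 1/2) (1/2))

/-- Coulomb matrix elements `v^{m,1}_{n,n'}`. -/
noncomputable def v1 (m : ℤ) (n n' : ℕ) : ℝ :=
  if 0 ≤ m then v0 (m + 1) n n' else v0 (m + 1) (n + 1) (n' + 1)

/-- The quadratic form `E_m[a]` at coupling `Z`. -/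
noncomputable def Eform (Z : ℝ) (m : ℤ) (a : ℕ → ℝ) : ℝ :=
  (∑' n : ℕ, 2 * Real.sqrt ((n : ℝ) + ((max m 0 : ℤ) : ℝ) + 1) * a n ^ 2)
    - (Z / 2) * ∑' n : ℕ, ∑' n' : ℕ, a n * (v0 m n n' + v1 m n n') * a n'

/-- The critical coupling constant `Z_c`. -/
noncomputable def Zc : ℝ :=
  (Real.Gamma (1/4) ^ 4 / (8 * Real.pi ^ 2) + 8 * Real.pi ^ 2 / Real.Gamma (1/4) ^ 4)⁻¹

section Aux
open Finset MeasureTheory intervalIntegral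

noncomputable def cc (j : ℕ) : ℝ := Real.Gamma (j + 1/2) / (Real.sqrt π * j.factorial)
noncomputable def ee (n : ℕ) : ℝ := Real.Gamma (n + 1/4) / (Real.Gamma (1/4) * n.factorial)
noncomputable def dd (n : ℕ) : ℝ := Real.Gamma (n + 3/4) / (Real.Gamma (3/4) * n.factorial)

lemma cc_pos (j : ℕ) : 0 < cc j := by
  apply div_pos (Real.Gamma_pos_of_pos (by positivity))
  exact mul_pos (Real.sqrt_pos.2 Real.pi_pos) (by exact_mod_cast j.factorial_pos)

lemma ee_pos (n : ℕ) : 0 < ee n := by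
  apply div_pos (Real.Gamma_pos_of_pos (by positivity))
  exact mul_pos (Real.Gamma_pos_of_pos (by norm_num)) (by exact_mod_cast n.factorial_pos)

lemma dd_pos (n : ℕ) : 0 < dd n := by
  apply div_pos (Real.Gamma_pos_of_pos (by positivity))
  exact mul_pos (Real.Gamma_pos_of_pos (by norm_num)) (by exact_mod_cast n.factorial_pos)

lemma cc_zero : cc 0 = 1 := by
  have : ((0:ℕ):ℝ) + 1/2 = 1/2 := by norm_num
  rw [cc, this, Real.Gamma_one_half_eq]
  simp [div_self (ne_of_gt (Real.sqrt_pos.2 Real.pi_pos))]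

lemma ee_zero : ee 0 = 1 := by
  simp [ee]
  exact ne_of_gt (Real.Gamma_pos_of_pos (by norm_num))

lemma dd_zero : dd 0 = 1 := by
  simp [dd]
  exact ne_of_gt (Real.Gamma_pos_of_pos (by norm_num))

lemma cc_succ (j : ℕ) : ((j:ℝ)+1) * cc (j+1) = ((j:ℝ) + 1/2) * cc j := by
  have h : Real.Gamma ((j:ℝ)+1 + 1/2) = ((j:ℝ)+1/2) * Real.Gamma ((j:ℝ)+1/2) := by
    have := Real.Gamma_add_one (s := (j:ℝ)+1/2) (by positivity)
    rw [← this]; ring_nf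
  simp only [cc, Nat.factorial_succ, Nat.cast_add, Nat.cast_one, Nat.cast_mul]
  rw [h]
  field_simp

lemma ee_succ (n : ℕ) : ((n:ℝ)+1) * ee (n+1) = ((n:ℝ) + 1/4) * ee n := by
  have h : Real.Gamma ((n:ℝ)+1 + 1/4) = ((n:ℝ)+1/4) * Real.Gamma ((n:ℝ)+1/4) := by
    have := Real.Gamma_add_one (s := (n:ℝ)+1/4) (by positivity)
    rw [← this]; ring_nf
  simp only [ee, Nat.factorial_succ, Nat.cast_add, Nat.cast_one, Nat.cast_mul]
  rw [h]
  field_simp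

lemma dd_succ (n : ℕ) : ((n:ℝ)+1) * dd (n+1) = ((n:ℝ) + 3/4) * dd n := by
  have h : Real.Gamma ((n:ℝ)+1 + 3/4) = ((n:ℝ)+3/4) * Real.Gamma ((n:ℝ)+3/4) := by
    have := Real.Gamma_add_one (s := (n:ℝ)+3/4) (by positivity)
    rw [← this]; ring_nf
  simp only [dd, Nat.factorial_succ, Nat.cast_add, Nat.cast_one, Nat.cast_mul]
  rw [h]
  field_simp

/-- Vandermonde-type convolution: coefficients of (1-x)^{-1/4} ⋆ (1-x)^{-1/2} = (1-x)^{-3/4}. -/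
lemma conv_ee_cc (n : ℕ) : ∑ k ∈ range (n+1), ee k * cc (n - k) = dd n := by
  induction n with
  | zero => simp [ee_zero, cc_zero, dd_zero]
  | succ n ih =>
    have key : ((n:ℝ)+1) * ∑ k ∈ range (n+2), ee k * cc (n+1-k)
        = ((n:ℝ)+3/4) * ∑ k ∈ range (n+1), ee k * cc (n-k) := by
      have h1 : ∀ k ∈ range (n+2), ((n:ℝ)+1) * (ee k * cc (n+1-k))
          = (k:ℝ) * ee k * cc (n+1-k) + ee k * (((n:ℝ)+1-(k:ℝ)) * cc (n+1-k)) := by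
        intro k hk; ring
      rw [Finset.mul_sum, Finset.sum_congr rfl h1, Finset.sum_add_distrib]
      have e2 : ∑ k ∈ range (n+2), (k:ℝ) * ee k * cc (n+1-k)
          = ∑ k ∈ range (n+1), ((k:ℝ)+1/4) * (ee k * cc (n-k)) := by
        rw [Finset.sum_range_succ'];
        simp only [Nat.cast_zero, zero_mul, zero_add, add_zero, Nat.cast_add, Nat.cast_one]
        rw [Finset.sum_congr rfl]
        intro k hk
        have : n + 1 - (k+1) = n - k := by omega
        rw [this]
        have h := ee_succ k
        calc (↑k + 1) * ee (k + 1) * cc (n - k) = (((k:ℝ)+1) * ee (k+1)) * cc (n-k) := by ring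
        _ = ((k:ℝ)+1/4) * (ee k * cc (n-k)) := by rw [h]; ring
      have e3 : ∑ k ∈ range (n+2), ee k * (((n:ℝ)+1-(k:ℝ)) * cc (n+1-k))
          = ∑ k ∈ range (n+1), ((n:ℝ)-(k:ℝ)+1/2) * (ee k * cc (n-k)) := by
        rw [Finset.sum_range_succ]
        simp only [Nat.cast_add, Nat.cast_one, Nat.sub_self]
        have hz : (n:ℝ)+1-((n:ℝ)+1) = 0 := by ring
        rw [hz, zero_mul, mul_zero, add_zero]
        rw [Finset.sum_congr rfl]
        intro k hk
        rw [Finset.mem_range] at hk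
        have hnk : n + 1 - k = (n - k) + 1 := by omega
        rw [hnk]
        have hc := cc_succ (n - k)
        have hcast : ((n - k : ℕ) : ℝ) = (n:ℝ) - (k:ℝ) := by
          have : k ≤ n := by omega
          push_cast [this]; ring
        rw [hcast] at hc
        have h5 : (n:ℝ)+1-(k:ℝ) = ((n:ℝ)-(k:ℝ))+1 := by ring
        rw [h5, hc]; ring
      rw [e2, e3, ← Finset.sum_add_distrib, Finset.mul_sum]
      congr 1; funext k; ring_nf
    have hd := dd_succ n
    rw [ih] at key
    have hpos : ((n:ℝ)+1) ≠ 0 := by positivity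
    field_simp at key hd ⊢
    nlinarith [key, hd]

lemma poly_id (M : ℕ) (x : ℝ) :
    2*(1-x) * (∑ j ∈ range (M+1), cc j * ((j:ℝ) * x ^ (j-1)))
      - ∑ j ∈ range (M+1), cc j * x^j = -((2*(M:ℝ)+1) * cc M * x^M) := by
  induction M with
  | zero => simp [cc_zero]
  | succ M ih =>
    rw [Finset.sum_range_succ (f := fun j => cc j * ((j:ℝ) * x ^ (j-1))),
        Finset.sum_range_succ (f := fun j => cc j * x ^ j)]
    have hexp : (M + 1) - 1 = M := by omega
    rw [hexp]
    have hc := cc_succ M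
    have expand : 2*(1-x) * ((∑ j ∈ range (M+1), cc j * ((j:ℝ) * x ^ (j-1)))
        + cc (M+1) * (((M:ℝ)+1) * x ^ M))
        - ((∑ j ∈ range (M+1), cc j * x^j) + cc (M+1) * x^(M+1))
        = (2*(1-x) * (∑ j ∈ range (M+1), cc j * ((j:ℝ) * x ^ (j-1)))
          - ∑ j ∈ range (M+1), cc j * x^j)
          + 2*(1-x) * ((((M:ℝ)+1) * cc (M+1)) * x ^ M) - cc (M+1) * x^(M+1) := by ring
    push_cast
    rw [expand, ih]
    have h3 : (2*(M:ℝ)+1) * cc M = (2*(M:ℝ)+2) * cc (M+1) := by linarith [cc_succ M]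
    linear_combination (2*(1-x)*x^M) * hc - x^(M+1) * h3

lemma partial_binom (J : ℕ) {x : ℝ} (h0 : 0 ≤ x) (h1 : x < 1) :
    (∑ j ∈ range J, cc j * x ^ j) * Real.sqrt (1 - x) ≤ 1 := by
  rcases J with _ | M
  · simp
  set g : ℝ → ℝ := fun y => (∑ j ∈ range (M+1), cc j * y ^ j) * Real.sqrt (1 - y) with hg
  have hderiv : ∀ y ∈ Set.Ioo (0:ℝ) 1, HasDerivAt g
      ((∑ j ∈ range (M+1), cc j * ((j:ℝ) * y ^ (j-1))) * Real.sqrt (1-y)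
        + (∑ j ∈ range (M+1), cc j * y ^ j) * (-(1 / (2 * Real.sqrt (1-y))))) y := by
    intro y hy
    have h1y : (1:ℝ) - y ≠ 0 := by
      have := hy.2; intro h; nlinarith
    have hP : HasDerivAt (fun z : ℝ => ∑ j ∈ range (M+1), cc j * z ^ j)
        (∑ j ∈ range (M+1), cc j * ((j:ℝ) * y ^ (j-1))) y := by
      apply HasDerivAt.fun_sum
      intro j hj
      exact (hasDerivAt_pow j y).const_mul (cc j)
    have hS : HasDerivAt (fun z : ℝ => Real.sqrt (1 - z)) (-(1 / (2 * Real.sqrt (1-y)))) y := by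
      have h := (Real.hasDerivAt_sqrt h1y).comp y ((hasDerivAt_id y).const_sub 1)
      exact h.congr_deriv (by ring)
    exact hP.mul hS
  have hderiv_nonpos : ∀ y ∈ Set.Ioo (0:ℝ) x, deriv g y ≤ 0 := by
    intro y hy
    have hy' : y ∈ Set.Ioo (0:ℝ) 1 := ⟨hy.1, lt_trans hy.2 h1⟩
    rw [(hderiv y hy').deriv]
    have hsq : 0 < Real.sqrt (1 - y) := Real.sqrt_pos.2 (by linarith [hy'.2])
    have key := poly_id M y
    have hx2 : Real.sqrt (1-y) * Real.sqrt (1-y) = 1 - y :=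
      Real.mul_self_sqrt (by linarith [hy'.2])
    have hMpos : 0 ≤ ((2*(M:ℝ)+1) * cc M * y^M) :=
      mul_nonneg (mul_nonneg (by positivity) (cc_pos M).le) (pow_nonneg hy.1.le M)
    have h2 : 2*(1-y) * (∑ j ∈ range (M+1), cc j * ((j:ℝ) * y ^ (j-1)))
        - (∑ j ∈ range (M+1), cc j * y ^ j) ≤ 0 := by rw [key]; linarith
    rw [mul_neg, ← sub_eq_add_neg, sub_nonpos, mul_one_div,
      le_div_iff₀ (by positivity : (0:ℝ) < 2*Real.sqrt (1-y))]
    have h3 : (∑ j ∈ range (M+1), cc j * ((j:ℝ) * y ^ (j-1))) * Real.sqrt (1-y) * (2*Real.sqrt (1-y))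
        = 2*(1-y) * (∑ j ∈ range (M+1), cc j * ((j:ℝ) * y ^ (j-1))) := by
      linear_combination (2 * (∑ j ∈ range (M+1), cc j * ((j:ℝ) * y ^ (j-1)))) * hx2
    linarith
  -- antitone on Icc 0 x
  have hcont : ContinuousOn g (Set.Icc 0 x) := by
    apply ContinuousOn.mul
    · exact (continuous_finset_sum _ (fun j _ => continuous_const.mul (continuous_pow j))).continuousOn
    · exact (Real.continuous_sqrt.comp (continuous_const.sub continuous_id)).continuousOn
  have hint : interior (Set.Icc (0:ℝ) x) ⊆ Set.Ioo 0 x := by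
    rw [interior_Icc]
  have hdiff : DifferentiableOn ℝ g (interior (Set.Icc (0:ℝ) x)) := by
    intro y hy
    have hy' := hint hy
    exact ((hderiv y ⟨hy'.1, lt_trans hy'.2 h1⟩).differentiableAt).differentiableWithinAt
  have hanti : AntitoneOn g (Set.Icc 0 x) :=
    antitoneOn_of_deriv_nonpos (convex_Icc 0 x) hcont hdiff
      (fun y hy => hderiv_nonpos y (hint hy))
  have hx0 : g x ≤ g 0 := hanti (Set.left_mem_Icc.2 h0) ⟨h0, le_refl x⟩ h0
  have hg0 : g 0 = 1 := by
    simp [hg]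
    rw [Finset.sum_eq_single 0]
    · simp [cc_zero]
    · intro j _ hj; simp [zero_pow hj]
    · simp
  calc (∑ j ∈ range (M+1), cc j * x ^ j) * Real.sqrt (1 - x) = g x := rfl
  _ ≤ g 0 := hx0
  _ = 1 := hg0

lemma complex_eq_real_integrand {p q : ℝ} (x : ℝ) (hx : x ∈ Set.uIcc (0:ℝ) 1) :
    ((x : ℂ) ^ ((p:ℂ) - 1) * (1 - (x:ℂ)) ^ ((q:ℂ) - 1))
      = ((x ^ (p-1) * (1-x) ^ (q-1) : ℝ) : ℂ) := by
  rw [Set.uIcc_of_le (by norm_num : (0:ℝ) ≤ 1)] at hx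
  have hx0 : 0 ≤ x := hx.1
  have hx1 : 0 ≤ 1 - x := by linarith [hx.2]
  rw [Complex.ofReal_mul, Complex.ofReal_cpow hx0, Complex.ofReal_cpow hx1]
  push_cast
  ring

lemma rbeta_integrable {p q : ℝ} (hp : 0 < p) (hq : 0 < q) :
    IntervalIntegrable (fun t : ℝ => t^(p-1) * (1-t)^(q-1)) volume 0 1 := by
  have hc := Complex.betaIntegral_convergent (u := (p:ℂ)) (v := (q:ℂ)) (by simpa) (by simpa)
  have := (hc.norm : IntervalIntegrable (fun x : ℝ => ‖(x:ℂ) ^ ((p:ℂ)-1) * (1-(x:ℂ)) ^ ((q:ℂ)-1)‖) volume 0 1)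
  apply this.congr
  intro x hx
  dsimp only
  have hx' : x ∈ Set.uIcc (0:ℝ) 1 := by
    rw [Set.uIoc_of_le (by norm_num : (0:ℝ) ≤ 1)] at hx
    rw [Set.uIcc_of_le (by norm_num : (0:ℝ) ≤ 1)]
    exact ⟨hx.1.le, hx.2⟩
  rw [complex_eq_real_integrand (p := p) (q := q) x hx']
  rw [Complex.norm_real, Real.norm_eq_abs, abs_of_nonneg]
  have h1 : x ∈ Set.Icc (0:ℝ) 1 := by rwa [Set.uIcc_of_le (by norm_num : (0:ℝ) ≤ 1)] at hx'
  exact mul_nonneg (Real.rpow_nonneg h1.1 _) (Real.rpow_nonneg (by linarith [h1.2]) _)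

lemma rbeta {p q : ℝ} (hp : 0 < p) (hq : 0 < q) :
    ∫ t in (0:ℝ)..1, t^(p-1) * (1-t)^(q-1)
      = Real.Gamma p * Real.Gamma q / Real.Gamma (p+q) := by
  have hC := Complex.Gamma_mul_Gamma_eq_betaIntegral (s := (p:ℂ)) (t := (q:ℂ)) (by simpa) (by simpa)
  have hbeta : Complex.betaIntegral (p:ℂ) (q:ℂ)
      = ((∫ t in (0:ℝ)..1, t^(p-1) * (1-t)^(q-1) : ℝ) : ℂ) := by
    rw [Complex.betaIntegral, ← intervalIntegral.integral_ofReal]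
    exact intervalIntegral.integral_congr (fun x hx => complex_eq_real_integrand x hx)
  rw [hbeta, ← Complex.ofReal_add, Complex.Gamma_ofReal, Complex.Gamma_ofReal,
    Complex.Gamma_ofReal] at hC
  have : Real.Gamma p * Real.Gamma q
      = Real.Gamma (p+q) * ∫ t in (0:ℝ)..1, t^(p-1) * (1-t)^(q-1) := by exact_mod_cast hC
  have hne : Real.Gamma (p+q) ≠ 0 := ne_of_gt (Real.Gamma_pos_of_pos (by positivity))
  field_simp
  linarith [this]

lemma keyA (k : ℕ) (J : ℕ) :
    ∑ j ∈ range J, cc j * ee (k+j)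
      ≤ Real.Gamma ((k:ℝ)+1/4) / (Real.Gamma (3/4) * Real.Gamma ((k:ℝ)+1/2)) := by
  have hG4 : (0:ℝ) < Real.Gamma (1/4) := Real.Gamma_pos_of_pos (by norm_num)
  have hG34 : (0:ℝ) < Real.Gamma (3/4) := Real.Gamma_pos_of_pos (by norm_num)
  -- integral representation of each term
  have hrep : ∀ j : ℕ, cc j * ee (k+j) = (1/(Real.Gamma (1/4) * Real.Gamma (3/4)))
      * ∫ t in (0:ℝ)..1, cc j * t^(j:ℕ) * (t^(((k:ℝ)+1/4)-1) * (1-t)^((3/4:ℝ)-1)) := by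
    intro j
    have h1 : ∫ t in (0:ℝ)..1, cc j * t^(j:ℕ) * (t^(((k:ℝ)+1/4)-1) * (1-t)^((3/4:ℝ)-1))
        = cc j * ∫ t in (0:ℝ)..1, t^((((k+j:ℕ):ℝ)+1/4)-1) * (1-t)^((3/4:ℝ)-1) := by
      rw [← intervalIntegral.integral_const_mul]
      apply intervalIntegral.integral_congr_ae
      filter_upwards with t ht
      rw [Set.uIoc_of_le (by norm_num : (0:ℝ) ≤ 1)] at ht
      have ht0 : 0 < t := ht.1
      have hsplit : (((k+j:ℕ):ℝ)+1/4)-1 = (((k:ℝ)+1/4)-1) + (j:ℝ) := by push_cast; ring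
      rw [hsplit, Real.rpow_add ht0, Real.rpow_natCast]
      ring
    rw [h1, rbeta (by positivity) (by norm_num)]
    have hpq : (((k+j:ℕ):ℝ)+1/4) + 3/4 = ((k+j:ℕ):ℝ) + 1 := by ring
    rw [hpq, Real.Gamma_nat_eq_factorial]
    rw [ee]
    field_simp
  rw [Finset.sum_congr rfl (fun j _ => hrep j), ← Finset.mul_sum]
  have hintj : ∀ j ∈ range J, IntervalIntegrable
      (fun t : ℝ => cc j * t^(j:ℕ) * (t^(((k:ℝ)+1/4)-1) * (1-t)^((3/4:ℝ)-1))) volume 0 1 := by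
    intro j _
    have hb := rbeta_integrable (p := ((k+j:ℕ):ℝ)+1/4) (q := 3/4) (by positivity) (by norm_num)
    apply (hb.const_mul (cc j)).congr
    intro t ht
    dsimp only
    rw [Set.uIoc_of_le (by norm_num : (0:ℝ) ≤ 1)] at ht
    have hsplit : (((k+j:ℕ):ℝ)+1/4)-1 = (((k:ℝ)+1/4)-1) + (j:ℝ) := by push_cast; ring
    rw [hsplit, Real.rpow_add ht.1, Real.rpow_natCast]
    ring
  rw [← intervalIntegral.integral_finset_sum hintj]
  have hgint := rbeta_integrable (p := (k:ℝ)+1/4) (q := 1/4) (by positivity) (by norm_num)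
  have hmono : ∫ t in (0:ℝ)..1, ∑ j ∈ range J, cc j * t^(j:ℕ) * (t^(((k:ℝ)+1/4)-1) * (1-t)^((3/4:ℝ)-1))
      ≤ ∫ t in (0:ℝ)..1, t^(((k:ℝ)+1/4)-1) * (1-t)^((1/4:ℝ)-1) := by
    have hsum_int : IntervalIntegrable
        (fun t : ℝ => ∑ j ∈ range J, cc j * t^(j:ℕ) * (t^(((k:ℝ)+1/4)-1) * (1-t)^((3/4:ℝ)-1)))
        volume 0 1 := by
      have h := IntervalIntegrable.sum (μ := volume) (a := 0) (b := 1) (range J) hintj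
      simpa [Finset.sum_fn] using h
    apply intervalIntegral.integral_mono_on (by norm_num) hsum_int hgint
    intro t ht
    rcases eq_or_lt_of_le ht.1 with h0 | h0
    · -- t = 0
      rw [← h0]
      have hne : ((k:ℝ)+1/4)-1 ≠ 0 := by
        rcases Nat.eq_zero_or_pos k with hk | hk
        · subst hk; norm_num
        · have h1k : (1:ℝ) ≤ (k:ℝ) := by exact_mod_cast hk
          intro hcon; linarith
      rw [Real.zero_rpow hne]
      simp
    rcases eq_or_lt_of_le ht.2 with h1 | h1
    · -- t = 1
      rw [h1]
      norm_num [Real.zero_rpow (show ((3:ℝ)/4)-1 ≠ 0 by norm_num),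
        Real.zero_rpow (show ((1:ℝ)/4)-1 ≠ 0 by norm_num)]
    · -- 0 < t < 1
      have hP := partial_binom J (le_of_lt h0) h1
      have h1t : (0:ℝ) < 1 - t := by linarith
      have hsq : (0:ℝ) < Real.sqrt (1-t) := Real.sqrt_pos.2 h1t
      have hPle : (∑ j ∈ range J, cc j * t ^ j) ≤ (1-t)^(-(1/2:ℝ)) := by
        rw [Real.rpow_neg h1t.le, ← Real.sqrt_eq_rpow, ← one_div]
        exact (le_div_iff₀ hsq).2 hP
      have hfactor : ∑ j ∈ range J, cc j * t^(j:ℕ) * (t^(((k:ℝ)+1/4)-1) * (1-t)^((3/4:ℝ)-1))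
          = (t^(((k:ℝ)+1/4)-1) * (1-t)^((3/4:ℝ)-1)) * ∑ j ∈ range J, cc j * t ^ j := by
        rw [Finset.mul_sum]; apply Finset.sum_congr rfl; intro j _; ring
      rw [hfactor]
      have hpos : (0:ℝ) < t^(((k:ℝ)+1/4)-1) * (1-t)^((3/4:ℝ)-1) :=
        mul_pos (Real.rpow_pos_of_pos h0 _) (Real.rpow_pos_of_pos h1t _)
      calc (t^(((k:ℝ)+1/4)-1) * (1-t)^((3/4:ℝ)-1)) * ∑ j ∈ range J, cc j * t ^ j
          ≤ (t^(((k:ℝ)+1/4)-1) * (1-t)^((3/4:ℝ)-1)) * (1-t)^(-(1/2:ℝ)) :=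
            mul_le_mul_of_nonneg_left hPle hpos.le
        _ = t^(((k:ℝ)+1/4)-1) * (1-t)^((1/4:ℝ)-1) := by
            rw [mul_assoc, ← Real.rpow_add h1t]
            norm_num
  calc 1/(Real.Gamma (1/4) * Real.Gamma (3/4))
        * ∫ t in (0:ℝ)..1, ∑ j ∈ range J, cc j * t^(j:ℕ) * (t^(((k:ℝ)+1/4)-1) * (1-t)^((3/4:ℝ)-1))
      ≤ 1/(Real.Gamma (1/4) * Real.Gamma (3/4))
        * ∫ t in (0:ℝ)..1, t^(((k:ℝ)+1/4)-1) * (1-t)^((1/4:ℝ)-1) := by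
        apply mul_le_mul_of_nonneg_left hmono (by positivity)
    _ = Real.Gamma ((k:ℝ)+1/4) / (Real.Gamma (3/4) * Real.Gamma ((k:ℝ)+1/2)) := by
        rw [rbeta (by positivity) (by norm_num)]
        have : ((k:ℝ)+1/4) + 1/4 = (k:ℝ)+1/2 := by ring
        rw [this]
        field_simp

lemma cc_def (j : ℕ) : cc j = Real.Gamma (j + 1/2) / (Real.sqrt π * j.factorial) := rfl
lemma ee_def (n : ℕ) : ee n = Real.Gamma (n + 1/4) / (Real.Gamma (1/4) * n.factorial) := rfl
lemma dd_def (n : ℕ) : dd n = Real.Gamma (n + 3/4) / (Real.Gamma (3/4) * n.factorial) := rfl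




lemma v0_eq (n n' : ℕ) : v0 0 n n'
    = Real.sqrt π * ∑ k ∈ Finset.range (min n n' + 1), cc k * cc (n-k) * cc (n'-k) := by
  have hsp : (0:ℝ) < Real.sqrt π := Real.sqrt_pos.2 Real.pi_pos
  have hss : Real.sqrt π * Real.sqrt π = π := Real.mul_self_sqrt Real.pi_pos.le
  have hpoch1 : ∀ m : ℕ, poch ((m:ℝ)+1) ((|(0:ℤ)| : ℤ) : ℝ) = 1 := by
    intro m
    have : ((|(0:ℤ)| : ℤ) : ℝ) = 0 := by norm_num
    rw [poch, this, add_zero, div_self (ne_of_gt (Real.Gamma_pos_of_pos (by positivity)))]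
  rw [v0, hpoch1, hpoch1, mul_one, Real.sqrt_one, mul_one, Finset.mul_sum, Finset.mul_sum]
  apply Finset.sum_congr rfl
  intro k hk
  rw [Finset.mem_range] at hk
  have hkn : k ≤ n := by omega
  have hkn' : k ≤ n' := by omega
  have hcast : ∀ {m j : ℕ}, j ≤ m → ((m - j : ℕ):ℝ) = (m:ℝ) - (j:ℝ) := by
    intro m j h; push_cast [h]; ring
  have hA : poch ((k:ℝ)+1) (((|(0:ℤ)| : ℤ) : ℝ) - 1/2) = Real.Gamma ((k:ℝ)+1/2) / (k.factorial : ℝ) := by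
    have h0 : ((|(0:ℤ)| : ℤ) : ℝ) = 0 := by norm_num
    rw [poch, h0]
    have h1 : (k:ℝ)+1+(0-1/2) = (k:ℝ)+1/2 := by ring
    rw [h1, Real.Gamma_nat_eq_factorial]
  have hB : ∀ m : ℕ, poch ((m:ℝ)+1/2) (1/2) = (m.factorial : ℝ) / Real.Gamma ((m:ℝ)+1/2) := by
    intro m
    rw [poch]
    have h1 : (m:ℝ)+1/2+1/2 = (m:ℝ)+1 := by ring
    rw [h1, Real.Gamma_nat_eq_factorial]
  have hBn : poch ((n:ℝ)-(k:ℝ)+1/2) (1/2) = ((n-k).factorial : ℝ) / Real.Gamma (((n-k:ℕ):ℝ)+1/2) := by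
    rw [← hcast hkn, hB]
  have hBn' : poch ((n':ℝ)-(k:ℝ)+1/2) (1/2) = ((n'-k).factorial : ℝ) / Real.Gamma (((n'-k:ℕ):ℝ)+1/2) := by
    rw [← hcast hkn', hB]
  rw [hA, hBn, hBn', cc, cc, cc]
  have g1 : (0:ℝ) < Real.Gamma ((k:ℝ)+1/2) := Real.Gamma_pos_of_pos (by positivity)
  have g2 : (0:ℝ) < Real.Gamma (((n-k:ℕ):ℝ)+1/2) := Real.Gamma_pos_of_pos (by positivity)
  have g3 : (0:ℝ) < Real.Gamma (((n'-k:ℕ):ℝ)+1/2) := Real.Gamma_pos_of_pos (by positivity)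
  have f1 : (0:ℝ) < (k.factorial : ℝ) := by exact_mod_cast k.factorial_pos
  have f2 : (0:ℝ) < ((n-k).factorial : ℝ) := by exact_mod_cast (n-k).factorial_pos
  have f3 : (0:ℝ) < ((n'-k).factorial : ℝ) := by exact_mod_cast (n'-k).factorial_pos
  set G1 := Real.Gamma ((k:ℝ)+1/2) with hG1
  set G2 := Real.Gamma (((n-k:ℕ):ℝ)+1/2) with hG2
  set G3 := Real.Gamma (((n'-k:ℕ):ℝ)+1/2) with hG3
  set F1 := (k.factorial:ℝ) with hF1
  set F2 := ((n-k).factorial:ℝ) with hF2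
  set F3 := ((n'-k).factorial:ℝ) with hF3
  set s := Real.sqrt π with hs
  field_simp
  linear_combination hss

noncomputable def SS (k : ℕ) : ℝ := Real.Gamma ((k:ℝ)+1/4) / (Real.Gamma (3/4) * Real.Gamma ((k:ℝ)+1/2))

lemma keyA' (k : ℕ) (J : ℕ) :
    ∑ j ∈ Finset.range J, cc j * ee (k+j) ≤ SS k := by
  rw [SS]
  exact keyA k J

lemma v0_nonneg (n n' : ℕ) : 0 ≤ v0 0 n n' := by
  rw [v0_eq]
  apply mul_nonneg (Real.sqrt_nonneg _)
  apply Finset.sum_nonneg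
  intro k _
  exact le_of_lt (mul_pos (mul_pos (cc_pos _) (cc_pos _)) (cc_pos _))

lemma v0_symm (n n' : ℕ) : v0 0 n n' = v0 0 n' n := by
  rw [v0_eq, v0_eq, min_comm]
  congr 1
  apply Finset.sum_congr rfl
  intro k _
  ring

lemma reindex_sum (k M : ℕ) :
    ∑ n' ∈ range M, (if k ≤ n' then cc (n'-k) * ee n' else 0)
      = ∑ j ∈ range (M-k), cc j * ee (k+j) := by
  induction M with
  | zero => simp
  | succ M ih =>
    rw [Finset.sum_range_succ, ih]
    by_cases h : k ≤ M
    · rw [if_pos h]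
      have h1 : M + 1 - k = (M - k) + 1 := by omega
      rw [h1, Finset.sum_range_succ]
      have h2 : k + (M - k) = M := by omega
      rw [h2]
    · rw [if_neg h]
      have h1 : M + 1 - k = 0 := by omega
      have h2 : M - k = 0 := by omega
      rw [h1, h2, add_zero]

lemma ccSS (k : ℕ) : cc k * SS k
    = (Real.Gamma (1/4) / (Real.sqrt π * Real.Gamma (3/4))) * ee k := by
  have hsp : (0:ℝ) < Real.sqrt π := Real.sqrt_pos.2 Real.pi_pos
  have g1 : (0:ℝ) < Real.Gamma ((k:ℝ)+1/2) := Real.Gamma_pos_of_pos (by positivity)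
  have g2 : (0:ℝ) < Real.Gamma (1/4) := Real.Gamma_pos_of_pos (by norm_num)
  have g3 : (0:ℝ) < Real.Gamma (3/4) := Real.Gamma_pos_of_pos (by norm_num)
  have f1 : (0:ℝ) < (k.factorial:ℝ) := by exact_mod_cast k.factorial_pos
  rw [cc_def, ee_def, SS]
  field_simp

lemma keyB (n M : ℕ) :
    ∑ n' ∈ range M, v0 0 n n' * ee n'
      ≤ (Real.Gamma (1/4) / Real.Gamma (3/4)) * dd n := by
  have hsp : (0:ℝ) < Real.sqrt π := Real.sqrt_pos.2 Real.pi_pos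
  have step1 : ∀ n' : ℕ, v0 0 n n' * ee n'
      = Real.sqrt π * ∑ k ∈ range (n+1),
          (if k ≤ n' then (cc k * cc (n-k)) * (cc (n'-k) * ee n') else 0) := by
    intro n'
    rw [v0_eq]
    have hfil : Finset.range (min n n' + 1)
        = (Finset.range (n+1)).filter (fun k => k ≤ n') := by
      ext k
      simp only [Finset.mem_range, Finset.mem_filter]
      omega
    rw [hfil, ← Finset.sum_filter]
    rw [mul_assoc, Finset.sum_mul]
    congr 1
    apply Finset.sum_congr rfl
    intro k _
    ring
  calc ∑ n' ∈ range M, v0 0 n n' * ee n'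
      = Real.sqrt π * ∑ n' ∈ range M, ∑ k ∈ range (n+1),
          (if k ≤ n' then (cc k * cc (n-k)) * (cc (n'-k) * ee n') else 0) := by
        rw [Finset.mul_sum]; exact Finset.sum_congr rfl (fun n' _ => step1 n')
    _ = Real.sqrt π * ∑ k ∈ range (n+1), (cc k * cc (n-k))
          * ∑ n' ∈ range M, (if k ≤ n' then cc (n'-k) * ee n' else 0) := by
        rw [Finset.sum_comm]
        congr 1
        apply Finset.sum_congr rfl
        intro k _
        rw [Finset.mul_sum]
        apply Finset.sum_congr rfl
        intro n' _
        by_cases h : k ≤ n' <;> simp [h]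
    _ ≤ Real.sqrt π * ∑ k ∈ range (n+1), (cc k * cc (n-k)) * SS k := by
        apply mul_le_mul_of_nonneg_left _ (Real.sqrt_nonneg _)
        apply Finset.sum_le_sum
        intro k _
        apply mul_le_mul_of_nonneg_left _ (le_of_lt (mul_pos (cc_pos _) (cc_pos _)))
        rw [reindex_sum]
        exact keyA' k (M-k)
    _ = (Real.Gamma (1/4) / Real.Gamma (3/4)) * dd n := by
        have : ∀ k ∈ range (n+1), (cc k * cc (n-k)) * SS k
            = (Real.Gamma (1/4) / (Real.sqrt π * Real.Gamma (3/4))) * (ee k * cc (n-k)) := by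
          intro k _
          have h := ccSS k
          calc cc k * cc (n-k) * SS k = (cc k * SS k) * cc (n-k) := by ring
          _ = (Real.Gamma (1/4) / (Real.sqrt π * Real.Gamma (3/4))) * (ee k * cc (n-k)) := by
              rw [h]; ring
        rw [Finset.sum_congr rfl this, ← Finset.mul_sum, conv_ee_cc]
        have g3 : (0:ℝ) < Real.Gamma (3/4) := Real.Gamma_pos_of_pos (by norm_num)
        field_simp

lemma gamma_log_convex {x : ℝ} (hx : 0 < x) :
    Real.Gamma (x + 1/2) ^ 2 ≤ Real.Gamma x * Real.Gamma (x + 1) := by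
  have h1 : (0:ℝ) < Real.Gamma x := Real.Gamma_pos_of_pos hx
  have h2 : (0:ℝ) < Real.Gamma (x+1) := Real.Gamma_pos_of_pos (by linarith)
  have h3 : (0:ℝ) < Real.Gamma (x+1/2) := Real.Gamma_pos_of_pos (by linarith)
  have hcv := Real.convexOn_log_Gamma.2 (Set.mem_Ioi.2 hx) (Set.mem_Ioi.2 (by linarith : (0:ℝ) < x + 1))
    (by norm_num : (0:ℝ) ≤ (1/2:ℝ)) (by norm_num : (0:ℝ) ≤ (1/2:ℝ)) (by norm_num)
  have hpt : (1/2:ℝ) • x + (1/2:ℝ) • (x+1) = x + 1/2 := by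
    simp [smul_eq_mul]; ring
  rw [hpt] at hcv
  simp only [Function.comp_apply, smul_eq_mul] at hcv
  have := Real.exp_le_exp.2 hcv
  rw [Real.exp_log h3] at this
  have hgoal : Real.Gamma (x+1/2) ^ 2 ≤ (Real.exp (1/2 * Real.log (Real.Gamma x) + 1/2 * Real.log (Real.Gamma (x+1)))) ^ 2 := by
    apply pow_le_pow_left₀ h3.le this
  calc Real.Gamma (x+1/2) ^ 2
      ≤ (Real.exp (1/2 * Real.log (Real.Gamma x) + 1/2 * Real.log (Real.Gamma (x+1)))) ^ 2 := hgoal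
    _ = Real.Gamma x * Real.Gamma (x+1) := by
        rw [← Real.exp_nat_mul]
        push_cast
        have : (2:ℝ) * (1/2 * Real.log (Real.Gamma x) + 1/2 * Real.log (Real.Gamma (x+1)))
            = Real.log (Real.Gamma x) + Real.log (Real.Gamma (x+1)) := by ring
        rw [this, Real.exp_add, Real.exp_log h1, Real.exp_log h2]

lemma gautschi (n : ℕ) :
    Real.Gamma ((n:ℝ)+3/4) ≤ Real.sqrt ((n:ℝ)+1) * Real.Gamma ((n:ℝ)+1/4) := by
  set x : ℝ := (n:ℝ) + 1/4 with hx
  have hx0 : 0 < x := by positivity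
  have h1 : (0:ℝ) < Real.Gamma x := Real.Gamma_pos_of_pos hx0
  have h3 : (0:ℝ) < Real.Gamma (x+1/2) := Real.Gamma_pos_of_pos (by linarith)
  have hlc := gamma_log_convex hx0
  rw [Real.Gamma_add_one (ne_of_gt hx0)] at hlc
  -- Γ(x+1/2)^2 ≤ x Γ(x)^2
  have h4 : Real.Gamma (x+1/2) ≤ Real.sqrt x * Real.Gamma x := by
    have hs : (Real.sqrt x * Real.Gamma x)^2 = x * (Real.Gamma x * Real.Gamma x) := by
      rw [mul_pow, Real.sq_sqrt hx0.le]; ring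
    have hsq : Real.Gamma (x+1/2)^2 ≤ (Real.sqrt x * Real.Gamma x)^2 := by
      rw [hs]; nlinarith [hlc]
    nlinarith [hsq, h3, mul_pos (Real.sqrt_pos.2 hx0) h1]
  have h5 : Real.sqrt x ≤ Real.sqrt ((n:ℝ)+1) := Real.sqrt_le_sqrt (by rw [hx]; linarith)
  have hxx : x + 1/2 = (n:ℝ)+3/4 := by rw [hx]; ring
  rw [hxx] at h4
  calc Real.Gamma ((n:ℝ)+3/4) ≤ Real.sqrt x * Real.Gamma x := h4
    _ ≤ Real.sqrt ((n:ℝ)+1) * Real.Gamma ((n:ℝ)+1/4) := by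
        apply mul_le_mul_of_nonneg_right h5 h1.le

lemma gamma_quarter_mul : Real.Gamma (1/4) * Real.Gamma (3/4) = π * Real.sqrt 2 := by
  have h := Real.Gamma_mul_Gamma_one_sub (1/4)
  have h34 : (1:ℝ) - 1/4 = 3/4 := by norm_num
  rw [h34] at h
  have hsin : Real.sin (π * (1/4)) = Real.sqrt 2 / 2 := by
    rw [show π * (1/4) = π/4 by ring, Real.sin_pi_div_four]
  rw [hsin] at h
  rw [h]
  have h2 : Real.sqrt 2 * Real.sqrt 2 = 2 := Real.mul_self_sqrt (by norm_num)
  have hs2 : (0:ℝ) < Real.sqrt 2 := Real.sqrt_pos.2 (by norm_num)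
  field_simp
  linear_combination (-1) * h2

lemma const_id : Real.Gamma (1/4)^2 / Real.Gamma (3/4)^2 = Real.Gamma (1/4)^4/(2*π^2) := by
  have h := gamma_quarter_mul
  have hsq : (Real.Gamma (1/4) * Real.Gamma (3/4))^2 = 2*π^2 := by
    rw [h, mul_pow, Real.sq_sqrt (by norm_num : (0:ℝ) ≤ 2)]; ring
  have hG4 : (0:ℝ) < Real.Gamma (1/4) := Real.Gamma_pos_of_pos (by norm_num)
  have hG34 : (0:ℝ) < Real.Gamma (3/4) := Real.Gamma_pos_of_pos (by norm_num)
  have hpi := Real.pi_pos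
  field_simp
  linear_combination (-1) * hsq

lemma weight_bound (n : ℕ) : (Real.Gamma (1/4)/Real.Gamma (3/4)) * dd n / ee n
    ≤ (Real.Gamma (1/4)^4/(2*π^2)) * Real.sqrt ((n:ℝ)+1) := by
  have hG4 : (0:ℝ) < Real.Gamma (1/4) := Real.Gamma_pos_of_pos (by norm_num)
  have hG34 : (0:ℝ) < Real.Gamma (3/4) := Real.Gamma_pos_of_pos (by norm_num)
  have hg1 : (0:ℝ) < Real.Gamma ((n:ℝ)+1/4) := Real.Gamma_pos_of_pos (by positivity)
  have hg3 : (0:ℝ) < Real.Gamma ((n:ℝ)+3/4) := Real.Gamma_pos_of_pos (by positivity)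
  have hf : (0:ℝ) < (n.factorial:ℝ) := by exact_mod_cast n.factorial_pos
  have key : (Real.Gamma (1/4)/Real.Gamma (3/4)) * dd n / ee n
      = (Real.Gamma (1/4)^2/Real.Gamma (3/4)^2) * (Real.Gamma ((n:ℝ)+3/4)/Real.Gamma ((n:ℝ)+1/4)) := by
    rw [dd_def, ee_def]
    field_simp
  rw [key, const_id]
  apply mul_le_mul_of_nonneg_left _ (by positivity)
  rw [div_le_iff₀ hg1]
  exact gautschi n

theorem v00_quadratic_form_sqrt_bound (a : ℕ → ℝ) (ha : (Function.support a).Finite) :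
    (∑' n : ℕ, ∑' n' : ℕ, a n * v0 0 n n' * a n') ≤
      Real.Gamma (1/4) ^ 4 / (2 * Real.pi ^ 2) *
        ∑' n : ℕ, Real.sqrt ((n : ℝ) + 1) * a n ^ 2 := by
  obtain ⟨B, hB⟩ := ha.bddAbove
  set N := B + 1 with hNdef
  have hN : ∀ n, a n ≠ 0 → n ∈ range N := by
    intro n hn
    rw [Finset.mem_range]
    have := hB (Function.mem_support.2 hn)
    omega
  have hzero : ∀ n ∉ range N, a n = 0 := by
    intro n hn
    by_contra hc
    exact hn (hN n hc)
  have hinner : ∀ n : ℕ, ∑' n' : ℕ, a n * v0 0 n n' * a n'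
      = ∑ n' ∈ range N, a n * v0 0 n n' * a n' := by
    intro n
    apply tsum_eq_sum
    intro n' hn'
    rw [hzero n' hn', mul_zero]
  have hL : (∑' n : ℕ, ∑' n' : ℕ, a n * v0 0 n n' * a n')
      = ∑ n ∈ range N, ∑ n' ∈ range N, a n * v0 0 n n' * a n' := by
    rw [tsum_congr hinner]
    apply tsum_eq_sum
    intro n hn
    apply Finset.sum_eq_zero
    intro n' _
    rw [hzero n hn, zero_mul, zero_mul]
  have hR : (∑' n : ℕ, Real.sqrt ((n : ℝ) + 1) * a n ^ 2)
      = ∑ n ∈ range N, Real.sqrt ((n : ℝ) + 1) * a n ^ 2 := by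
    apply tsum_eq_sum
    intro n hn
    rw [hzero n hn]
    ring
  rw [hL, hR]
  -- Schur test with weights ee
  have amgm : ∀ n n' : ℕ, a n * v0 0 n n' * a n'
      ≤ v0 0 n n' * ((1/2) * (ee n'/ee n) * a n^2 + (1/2) * (ee n/ee n') * a n'^2) := by
    intro n n'
    have hv := v0_nonneg n n'
    have he := ee_pos n
    have he' := ee_pos n'
    have h1 : Real.sqrt (ee n'/ee n)^2 = ee n'/ee n := Real.sq_sqrt (by positivity)
    have h2 : Real.sqrt (ee n/ee n')^2 = ee n/ee n' := Real.sq_sqrt (by positivity)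
    have hs : Real.sqrt (ee n'/ee n) * Real.sqrt (ee n/ee n') = 1 := by
      rw [← Real.sqrt_mul (by positivity)]
      rw [show (ee n'/ee n) * (ee n/ee n') = 1 by field_simp]
      exact Real.sqrt_one
    have h := sq_nonneg (Real.sqrt (ee n'/ee n) * |a n| - Real.sqrt (ee n/ee n') * |a n'|)
    have h3 : Real.sqrt (ee n'/ee n) * |a n| * (Real.sqrt (ee n/ee n') * |a n'|)
        = |a n| * |a n'| := by
      calc Real.sqrt (ee n'/ee n) * |a n| * (Real.sqrt (ee n/ee n') * |a n'|)
          = (Real.sqrt (ee n'/ee n) * Real.sqrt (ee n/ee n')) * (|a n| * |a n'|) := by ring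
        _ = |a n| * |a n'| := by rw [hs]; ring
    have key2 : |a n| * |a n'| ≤ (1/2) * (ee n'/ee n) * a n^2 + (1/2) * (ee n/ee n') * a n'^2 := by
      nlinarith [h, h1, h2, h3, sq_abs (a n), sq_abs (a n')]
    calc a n * v0 0 n n' * a n' ≤ |a n * v0 0 n n' * a n'| := le_abs_self _
      _ = v0 0 n n' * (|a n| * |a n'|) := by
          rw [abs_mul, abs_mul, abs_of_nonneg hv]; ring
      _ ≤ v0 0 n n' * ((1/2) * (ee n'/ee n) * a n^2 + (1/2) * (ee n/ee n') * a n'^2) :=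
          mul_le_mul_of_nonneg_left key2 hv
  calc ∑ n ∈ range N, ∑ n' ∈ range N, a n * v0 0 n n' * a n'
      ≤ ∑ n ∈ range N, ∑ n' ∈ range N,
          v0 0 n n' * ((1/2) * (ee n'/ee n) * a n^2 + (1/2) * (ee n/ee n') * a n'^2) :=
        Finset.sum_le_sum (fun n _ => Finset.sum_le_sum (fun n' _ => amgm n n'))
    _ = ∑ n ∈ range N, (a n^2 / ee n) * ∑ n' ∈ range N, v0 0 n n' * ee n' := by
        have split : ∀ n n' : ℕ,
            v0 0 n n' * ((1/2) * (ee n'/ee n) * a n^2 + (1/2) * (ee n/ee n') * a n'^2)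
            = (1/2) * ((a n^2 / ee n) * (v0 0 n n' * ee n'))
              + (1/2) * ((a n'^2 / ee n') * (v0 0 n n' * ee n)) := by
          intro n n'
          have he := ee_pos n
          have he' := ee_pos n'
          field_simp
        rw [Finset.sum_congr rfl (fun n _ => Finset.sum_congr rfl (fun n' _ => split n n'))]
        simp only [Finset.sum_add_distrib]
        have hsymm : ∑ n ∈ range N, ∑ n' ∈ range N, 1/2 * ((a n'^2/ee n') * (v0 0 n n' * ee n))
            = ∑ n ∈ range N, ∑ n' ∈ range N, 1/2 * ((a n^2/ee n) * (v0 0 n n' * ee n')) := by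
          rw [Finset.sum_comm]
          exact Finset.sum_congr rfl fun n _ => Finset.sum_congr rfl fun n' _ => by rw [v0_symm]
        rw [hsymm, ← Finset.sum_add_distrib]
        apply Finset.sum_congr rfl
        intro n _
        rw [← Finset.sum_add_distrib, Finset.mul_sum]
        apply Finset.sum_congr rfl
        intro n' _
        ring
    _ ≤ ∑ n ∈ range N, (a n^2 / ee n) * ((Real.Gamma (1/4) / Real.Gamma (3/4)) * dd n) := by
        apply Finset.sum_le_sum
        intro n _
        exact mul_le_mul_of_nonneg_left (keyB n N) (div_nonneg (sq_nonneg _) (ee_pos n).le)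
    _ ≤ ∑ n ∈ range N, Real.Gamma (1/4) ^ 4 / (2 * π ^ 2) * (Real.sqrt ((n : ℝ) + 1) * a n ^ 2) := by
        apply Finset.sum_le_sum
        intro n _
        have hw := weight_bound n
        have he := ee_pos n
        calc (a n^2 / ee n) * ((Real.Gamma (1/4) / Real.Gamma (3/4)) * dd n)
            = a n^2 * ((Real.Gamma (1/4)/Real.Gamma (3/4)) * dd n / ee n) := by ring
          _ ≤ a n^2 * ((Real.Gamma (1/4)^4/(2*π^2)) * Real.sqrt ((n:ℝ)+1)) :=
              mul_le_mul_of_nonneg_left hw (sq_nonneg _)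
          _ = Real.Gamma (1/4) ^ 4 / (2 * π ^ 2) * (Real.sqrt ((n : ℝ) + 1) * a n ^ 2) := by ring
    _ = Real.Gamma (1/4) ^ 4 / (2 * Real.pi ^ 2) *
        ∑ n ∈ range N, Real.sqrt ((n : ℝ) + 1) * a n ^ 2 := by
        rw [Finset.mul_sum]

end Aux
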